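/- (Continuous difference propagation of AND) Let U, V be independent uniformly distributed Boolean random variables, and let Dₓ, D_y be Boolean random variables such that U, V, Dₓ, D_y are mutually independent, with continuous differences Cₓ = E[(−1)^{Dₓ}] and C_y = E[(−1)^{D_y}]. Define the output difference bit D_z = (U ∧ V) ⊕ ((U ⊕ Dₓ) ∧ (V ⊕ D_y)). Then the continuous difference of D_z satisfies C_z = E[(−1)^{D_z}] = (Cₓ·C_y + Cₓ + C_y + 1)/4. -/

import Mathlib

open MeasureTheory ProbabilityTheory

/-- The continuous difference (correlation) `E[(-1)^D]` of a Boolean random variable. -/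
noncomputable def cdiff {Ω : Type*} [MeasurableSpace Ω] (μ : Measure Ω) (D : Ω → Bool) : ℝ :=
  ∫ ω, (if D ω then (-1 : ℝ) else 1) ∂μ

lemma integral_comp_fintype' {Ω α : Type*} [MeasurableSpace Ω] [MeasurableSpace α]
    [Fintype α] [MeasurableSingletonClass α]
    (μ : Measure Ω) [IsProbabilityMeasure μ] (T : Ω → α) (hT : Measurable T) (g : α → ℝ) :
    ∫ ω, g (T ω) ∂μ = ∑ x, (μ (T ⁻¹' {x})).toReal * g x := by
  have : IsProbabilityMeasure (μ.map T) := Measure.isProbabilityMeasure_map hT.aemeasurable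
  have hg : AEStronglyMeasurable g (Measure.map T μ) :=
    (measurable_of_countable g).aestronglyMeasurable
  rw [← integral_map hT.aemeasurable hg, integral_fintype (.of_finite)]
  simp [Measure.real, Measure.map_apply hT (measurableSet_singleton _), smul_eq_mul]

theorem continuous_difference_and {Ω : Type*} [MeasurableSpace Ω]
    (μ : Measure Ω) [IsProbabilityMeasure μ]
    (U V Dx Dy : Ω → Bool)
    (hU : Measurable U) (hV : Measurable V)
    (hDx : Measurable Dx) (hDy : Measurable Dy)
    (hindep : iIndepFun ![U, V, Dx, Dy] μ)
    (hUuni : ∀ bv : Bool, μ {ω | U ω = bv} = 1 / 2)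
    (hVuni : ∀ bv : Bool, μ {ω | V ω = bv} = 1 / 2) :
    cdiff μ (fun ω => xor (U ω && V ω) ((xor (U ω) (Dx ω)) && (xor (V ω) (Dy ω))))
      = (cdiff μ Dx * cdiff μ Dy + cdiff μ Dx + cdiff μ Dy + 1) / 4 := by
  -- joint measure factorization
  have hjoint : ∀ a b c d : Bool,
      μ ((fun ω => (U ω, V ω, Dx ω, Dy ω)) ⁻¹' {(a, b, c, d)})
        = μ (U ⁻¹' {a}) * μ (V ⁻¹' {b}) * μ (Dx ⁻¹' {c}) * μ (Dy ⁻¹' {d}) := by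
    intro a b c d
    have h := (iIndepFun_iff_measure_inter_preimage_eq_mul.mp hindep)
      (Finset.univ) (sets := ![{a}, {b}, {c}, {d}])
      (fun i _ => by fin_cases i <;> exact measurableSet_singleton _)
    have hset : ((fun ω => (U ω, V ω, Dx ω, Dy ω)) ⁻¹' {(a, b, c, d)})
        = ⋂ i ∈ Finset.univ, (![U, V, Dx, Dy] i) ⁻¹' (![{a}, {b}, {c}, {d}] i) := by
      ext ω
      simp [Fin.forall_fin_succ, Prod.ext_iff, and_assoc]
    rw [hset, h, Fin.prod_univ_four]
    simp [mul_assoc]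
  set c : ℝ := (μ (Dx ⁻¹' {true})).toReal with hc
  set d : ℝ := (μ (Dy ⁻¹' {true})).toReal with hd
  have hcompl : ∀ (D : Ω → Bool) (hD : Measurable D),
      (μ (D ⁻¹' {false})).toReal = 1 - (μ (D ⁻¹' {true})).toReal := by
    intro D hD
    have : D ⁻¹' {false} = (D ⁻¹' {true})ᶜ := by ext ω; simp
    rw [this, prob_compl_eq_one_sub (hD (measurableSet_singleton _)),
      ENNReal.toReal_sub_of_le prob_le_one (by simp)]
    simp
  have hxc : (μ (Dx ⁻¹' {false})).toReal = 1 - c := hcompl Dx hDx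
  have hyd : (μ (Dy ⁻¹' {false})).toReal = 1 - d := hcompl Dy hDy
  have hcdx : cdiff μ Dx = 1 - 2 * c := by
    have h1 : cdiff μ Dx = ∑ x : Bool, (μ (Dx ⁻¹' {x})).toReal * (if x then (-1:ℝ) else 1) :=
      integral_comp_fintype' μ Dx hDx (fun b => if b then (-1:ℝ) else 1)
    rw [h1, Fintype.sum_bool]
    simp [hxc]
    ring
  have hcdy : cdiff μ Dy = 1 - 2 * d := by
    have h1 : cdiff μ Dy = ∑ x : Bool, (μ (Dy ⁻¹' {x})).toReal * (if x then (-1:ℝ) else 1) :=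
      integral_comp_fintype' μ Dy hDy (fun b => if b then (-1:ℝ) else 1)
    rw [h1, Fintype.sum_bool]
    simp [hyd]
    ring
  have hT : Measurable (fun ω => (U ω, V ω, Dx ω, Dy ω)) :=
    hU.prodMk (hV.prodMk (hDx.prodMk hDy))
  have hU2 : ∀ a : Bool, (μ (U ⁻¹' {a})).toReal = 1/2 := by
    intro a
    have := hUuni a
    rw [show U ⁻¹' {a} = {ω | U ω = a} from rfl, this]
    simp [ENNReal.toReal_div]
  have hV2 : ∀ a : Bool, (μ (V ⁻¹' {a})).toReal = 1/2 := by
    intro a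
    have := hVuni a
    rw [show V ⁻¹' {a} = {ω | V ω = a} from rfl, this]
    simp [ENNReal.toReal_div]
  have key : cdiff μ (fun ω => xor (U ω && V ω) ((xor (U ω) (Dx ω)) && (xor (V ω) (Dy ω))))
      = ∑ x : Bool × Bool × Bool × Bool,
          (μ ((fun ω => (U ω, V ω, Dx ω, Dy ω)) ⁻¹' {x})).toReal *
            (if xor (x.1 && x.2.1) ((xor x.1 x.2.2.1) && (xor x.2.1 x.2.2.2)) then (-1:ℝ) else 1) := by
    rw [cdiff]
    exact integral_comp_fintype' μ _ hT
      (fun x => if xor (x.1 && x.2.1) ((xor x.1 x.2.2.1) && (xor x.2.1 x.2.2.2)) then (-1:ℝ) else 1)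
  rw [key, hcdx, hcdy]
  rw [Fintype.sum_prod_type]
  simp only [Fintype.sum_prod_type, Fintype.sum_bool]
  simp only [hjoint, ENNReal.toReal_mul, hU2, hV2, ← hc, ← hd, hxc, hyd]
  norm_num
  ring
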